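/- Let G=(V,E) be a connected graph, J a join in G, and U₁,…,U_m (not necessarily distinct) vertex sets forming a laminar family such that |δ(U_i)∩J| = 1 for all i and every edge of G lies in at most two of the cuts δ(U_i) (counted with multiplicity). Then there exist vertex sets W₁,…,W_m forming a laminar family such that for every i, δ(W_i) is a J-cut (a simple cut containing exactly one edge of J) with δ(W_i) ⊆ δ(U_i); in particular, every edge of G lies in at most two of the cuts δ(W_i). -/

import Mathlib

open scoped Classical

noncomputable section

/-- The edge set of a simple closed walk in the multigraph with endpoint map `ends`. -/
def IsCycle {V ε : Type} (ends : ε → Sym2 V) (C : Finset ε) : Prop :=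
  ∃ (n : ℕ) (v : Fin (n + 1) → V) (e : Fin (n + 1) → ε),
    Function.Injective v ∧ Function.Injective e ∧
    (∀ i, ends (e i) = s(v i, v (i + 1))) ∧
    C = Finset.image e Finset.univ

/-- The edge set of a simple (open) path. -/
def IsPath {V ε : Type} (ends : ε → Sym2 V) (P : Finset ε) : Prop :=
  ∃ (n : ℕ) (v : Fin (n + 1) → V) (e : Fin n → ε),
    Function.Injective v ∧ Function.Injective e ∧
    (∀ i : Fin n, ends (e i) = s(v i.castSucc, v i.succ)) ∧
    P = Finset.image e Finset.univ

/-- The cut `δ(U)`: edges with exactly one endpoint in `U`. -/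
def cutF {V ε : Type} [Fintype ε] (ends : ε → Sym2 V) (U : Set V) : Finset ε :=
  Finset.univ.filter (fun e => ∃ a b, ends e = s(a, b) ∧ a ∈ U ∧ b ∉ U)

/-- `U` is nonempty and induces a connected subgraph. -/
def ConnectedOn {V ε : Type} (ends : ε → Sym2 V) (U : Set V) : Prop :=
  U.Nonempty ∧ ∀ a ∈ U, ∀ b ∈ U,
    Relation.ReflTransGen (fun x y => x ∈ U ∧ y ∈ U ∧ ∃ e, ends e = s(x, y)) a b

/-- The multigraph is connected. -/
def MGConnected {V ε : Type} (ends : ε → Sym2 V) : Prop :=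
  ConnectedOn ends Set.univ

/-- `δ(U)` is a simple cut: both sides induce connected subgraphs. -/
def IsSimpleCut {V ε : Type} (ends : ε → Sym2 V) (U : Set V) : Prop :=
  ConnectedOn ends U ∧ ConnectedOn ends Uᶜ

/-- A `D`-cycle: a cycle containing exactly one demand edge. -/
def IsDCycle {V ε : Type} [DecidableEq ε] (ends : ε → Sym2 V) (Dem : Finset ε)
    (C : Finset ε) : Prop :=
  IsCycle ends C ∧ (C ∩ Dem).card = 1

/-- A `D`-cut: a simple cut containing exactly one demand edge. -/
def IsDCut {V ε : Type} [Fintype ε] [DecidableEq ε] (ends : ε → Sym2 V) (Dem : Finset ε)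
    (U : Set V) : Prop :=
  IsSimpleCut ends U ∧ (cutF ends U ∩ Dem).card = 1

/-- Planarity of a multigraph: there is a drawing in the plane with injective vertex
positions and arcs for the edges that are internally disjoint. -/
def IsPlanar {V ε : Type} (ends : ε → Sym2 V) : Prop :=
  ∃ (pos : V → ℝ × ℝ) (arc : ε → ℝ → ℝ × ℝ),
    Function.Injective pos ∧
    (∀ e, ContinuousOn (arc e) (Set.Icc 0 1)) ∧
    (∀ e a b, ends e = s(a, b) →
      (arc e 0 = pos a ∧ arc e 1 = pos b) ∨ (arc e 0 = pos b ∧ arc e 1 = pos a)) ∧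
    (∀ e, Set.InjOn (arc e) (Set.Ico 0 1)) ∧
    (∀ e f, e ≠ f → ∀ s ∈ Set.Ioo (0:ℝ) 1, ∀ t ∈ Set.Icc (0:ℝ) 1, arc e s ≠ arc f t) ∧
    (∀ e, ∀ s ∈ Set.Ioo (0:ℝ) 1, ∀ w, arc e s ≠ pos w)

namespace Stmt13Aux

variable {V ε : Type}

/-- Adjacency within a set `S`. -/
def mrel (ends : ε → Sym2 V) (S : Set V) (x y : V) : Prop :=
  x ∈ S ∧ y ∈ S ∧ ∃ e, ends e = s(x, y)

lemma mrel_symm (ends : ε → Sym2 V) (S : Set V) : Symmetric (mrel ends S) := by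
  rintro x y ⟨hx, hy, e, he⟩
  exact ⟨hy, hx, e, by rw [he]; exact Sym2.eq_swap⟩

lemma mrel_mono (ends : ε → Sym2 V) {S T : Set V} (h : S ⊆ T) {x y : V} :
    mrel ends S x y → mrel ends T x y := by
  rintro ⟨hx, hy, he⟩
  exact ⟨h hx, h hy, he⟩

/-- The connected component of `S` containing `v`. -/
def mcomp (ends : ε → Sym2 V) (S : Set V) (v : V) : Set V :=
  {y | Relation.ReflTransGen (mrel ends S) v y}

lemma mem_mcomp_self (ends : ε → Sym2 V) (S : Set V) (v : V) : v ∈ mcomp ends S v :=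
  Relation.ReflTransGen.refl

lemma mcomp_subset (ends : ε → Sym2 V) {S : Set V} {v : V} (hv : v ∈ S) :
    mcomp ends S v ⊆ S := by
  intro y hy
  rcases Relation.ReflTransGen.cases_tail hy with h | ⟨c, _, hc⟩
  · rwa [h]
  · exact hc.2.1

lemma rtg_symm (ends : ε → Sym2 V) (S : Set V) {a b : V}
    (h : Relation.ReflTransGen (mrel ends S) a b) :
    Relation.ReflTransGen (mrel ends S) b a :=
  by
    haveI : Std.Symm (mrel ends S) := ⟨fun _ _ h => mrel_symm ends S h⟩
    exact Std.Symm.symm _ _ h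

lemma mcomp_conn_to (ends : ε → Sym2 V) {S : Set V} {v : V} :
    ∀ {y : V}, Relation.ReflTransGen (mrel ends S) v y →
      Relation.ReflTransGen (mrel ends (mcomp ends S v)) v y := by
  intro y hy
  induction hy with
  | refl => exact Relation.ReflTransGen.refl
  | tail hab h ih =>
      exact ih.tail ⟨hab, hab.tail h, h.2.2⟩

lemma mcomp_conn' (ends : ε → Sym2 V) {S : Set V} {v : V} :
    ∀ a ∈ mcomp ends S v, ∀ b ∈ mcomp ends S v,
      Relation.ReflTransGen (mrel ends (mcomp ends S v)) a b :=
  fun _ ha _ hb => (rtg_symm ends _ (mcomp_conn_to ends ha)).trans (mcomp_conn_to ends hb)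

lemma mcomp_absorb (ends : ε → Sym2 V) {S T : Set V} {v : V}
    (hTS : T ⊆ S)
    (hT : ∀ a ∈ T, ∀ b ∈ T, Relation.ReflTransGen (mrel ends T) a b)
    {y : V} (hyT : y ∈ T) (hyC : y ∈ mcomp ends S v) :
    T ⊆ mcomp ends S v :=
  fun b hb =>
    Relation.ReflTransGen.trans hyC
      (Relation.ReflTransGen.mono (fun _ _ h => mrel_mono ends hTS h) _ _ (hT y hyT b hb))

lemma reach_compl (ends : ε → Sym2 V) (hconn : MGConnected ends)
    {K : Set V} (hc : ∀ a ∈ K, ∀ b ∈ K, Relation.ReflTransGen (mrel ends K) a b)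
    {u₀ v : V} (hu₀ : u₀ ∈ K) (hv : v ∈ Kᶜ) :
    ∀ w ∉ mcomp ends Kᶜ v,
      Relation.ReflTransGen (mrel ends (mcomp ends Kᶜ v)ᶜ) w u₀ := by
  set X := mcomp ends Kᶜ v with hX
  have hXK : X ⊆ Kᶜ := mcomp_subset ends hv
  have hA : ∀ p ∈ K, Relation.ReflTransGen (mrel ends Xᶜ) p u₀ := by
    intro p hp
    exact Relation.ReflTransGen.mono
      (fun a b hab => mrel_mono ends (fun x hx hxX => hXK hxX hx) hab) _ _ (hc p hp u₀ hu₀)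
  have key : ∀ w, Relation.ReflTransGen (mrel ends (Set.univ : Set V)) w u₀ →
      w ∉ X → Relation.ReflTransGen (mrel ends Xᶜ) w u₀ := by
    intro w hglob
    induction hglob using Relation.ReflTransGen.head_induction_on with
    | refl => exact fun _ => Relation.ReflTransGen.refl
    | @head a c hstep htail ih =>
        intro ha
        by_cases haK : a ∈ K
        · exact hA a haK
        · have hcX : c ∉ X := by
            intro hcX
            apply ha
            obtain ⟨-, -, e, he⟩ := hstep
            exact Relation.ReflTransGen.tail hcX
              ⟨hXK hcX, haK, e, by rw [he]; exact Sym2.eq_swap⟩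
          exact Relation.ReflTransGen.head ⟨ha, hcX, hstep.2.2⟩ (ih hcX)
  intro w hw
  exact key w (hconn.2 w (Set.mem_univ w) u₀ (Set.mem_univ u₀)) hw

lemma mem_cutF [Fintype ε] (ends : ε → Sym2 V) (U : Set V) (e : ε) :
    e ∈ cutF ends U ↔ ∃ a b, ends e = s(a, b) ∧ a ∈ U ∧ b ∉ U := by
  simp [cutF]

lemma cutF_compl [Fintype ε] (ends : ε → Sym2 V) (U : Set V) :
    cutF ends Uᶜ = cutF ends U := by
  ext e
  rw [mem_cutF, mem_cutF]
  constructor <;> rintro ⟨a, b, he, ha, hb⟩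
  · exact ⟨b, a, by rw [he]; exact Sym2.eq_swap, by simpa using hb, by simpa using ha⟩
  · exact ⟨b, a, by rw [he]; exact Sym2.eq_swap, by simpa using hb, by simpa using ha⟩

lemma cut_subset [Fintype ε] (ends : ε → Sym2 V) {Uset : Set V} {u v : V}
    (hu : u ∈ Uset) (hv : v ∉ Uset) :
    cutF ends (mcomp ends (mcomp ends Uset u)ᶜ v) ⊆ cutF ends Uset := by
  set K := mcomp ends Uset u with hK
  set X := mcomp ends Kᶜ v with hXd
  have hKU : K ⊆ Uset := mcomp_subset ends hu
  have hXK : X ⊆ Kᶜ := mcomp_subset ends (fun h => hv (hKU h))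
  intro e he
  rw [mem_cutF] at he ⊢
  obtain ⟨a, b, he, ha, hb⟩ := he
  have haK : a ∉ K := hXK ha
  have hbK : b ∈ K := by
    by_contra hbK
    exact hb (Relation.ReflTransGen.tail ha ⟨hXK ha, hbK, e, he⟩)
  have haU : a ∉ Uset := by
    intro haU
    exact haK (Relation.ReflTransGen.tail hbK
      ⟨hKU hbK, haU, e, by rw [he]; exact Sym2.eq_swap⟩)
  exact ⟨b, a, by rw [he]; exact Sym2.eq_swap, hKU hbK, haU⟩

lemma crossfree_aux (ends : ε → Sym2 V) (hconn : MGConnected ends)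
    {K₁ K₂ : Set V} {u₁ u₂ v₁ v₂ : V}
    (hu₁ : u₁ ∈ K₁) (hu₂ : u₂ ∈ K₂)
    (hc₁ : ∀ a ∈ K₁, ∀ b ∈ K₁, Relation.ReflTransGen (mrel ends K₁) a b)
    (hc₂ : ∀ a ∈ K₂, ∀ b ∈ K₂, Relation.ReflTransGen (mrel ends K₂) a b)
    (hv₁ : v₁ ∈ K₁ᶜ) (hv₂ : v₂ ∈ K₂ᶜ)
    (hlam : Disjoint K₁ K₂ ∨ K₁ ⊆ K₂ ∨ K₂ ⊆ K₁) :
    mcomp ends K₁ᶜ v₁ ⊆ mcomp ends K₂ᶜ v₂ ∨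
    mcomp ends K₂ᶜ v₂ ⊆ mcomp ends K₁ᶜ v₁ ∨
    Disjoint (mcomp ends K₁ᶜ v₁) (mcomp ends K₂ᶜ v₂) ∨
    mcomp ends K₁ᶜ v₁ ∪ mcomp ends K₂ᶜ v₂ = Set.univ := by
  set X₁ := mcomp ends K₁ᶜ v₁ with hX₁
  set X₂ := mcomp ends K₂ᶜ v₂ with hX₂
  have hX₁K : X₁ ⊆ K₁ᶜ := mcomp_subset ends hv₁
  have hX₂K : X₂ ⊆ K₂ᶜ := mcomp_subset ends hv₂
  have hX₁conn := mcomp_conn' (S := K₁ᶜ) (v := v₁) ends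
  have hX₂conn := mcomp_conn' (S := K₂ᶜ) (v := v₂) ends
  have sub21 : X₂ ⊆ K₁ᶜ → X₂ ⊆ X₁ ∨ Disjoint X₁ X₂ := by
    intro hs
    by_cases hd : Disjoint X₁ X₂
    · exact Or.inr hd
    · obtain ⟨y, hy1, hy2⟩ := Set.not_disjoint_iff.mp hd
      exact Or.inl (mcomp_absorb ends hs hX₂conn hy2 hy1)
  have sub12 : X₁ ⊆ K₂ᶜ → X₁ ⊆ X₂ ∨ Disjoint X₁ X₂ := by
    intro hs
    by_cases hd : Disjoint X₁ X₂
    · exact Or.inr hd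
    · obtain ⟨y, hy1, hy2⟩ := Set.not_disjoint_iff.mp hd
      exact Or.inl (mcomp_absorb ends hs hX₁conn hy1 hy2)
  rcases hlam with hD | hs | hs
  · by_cases h1 : Disjoint X₁ K₂
    · rcases sub12 (fun x hx hK => Set.disjoint_left.mp h1 hx hK) with h | h
      · exact Or.inl h
      · exact Or.inr (Or.inr (Or.inl h))
    · obtain ⟨y, hyX, hyK⟩ := Set.not_disjoint_iff.mp h1
      have hK₂X₁ : K₂ ⊆ X₁ :=
        mcomp_absorb ends (fun x hx hx1 => Set.disjoint_left.mp hD hx1 hx) hc₂ hyK hyX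
      by_cases h2 : Disjoint X₂ K₁
      · rcases sub21 (fun x hx hK => Set.disjoint_left.mp h2 hx hK) with h | h
        · exact Or.inr (Or.inl h)
        · exact Or.inr (Or.inr (Or.inl h))
      · obtain ⟨z, hzX, hzK⟩ := Set.not_disjoint_iff.mp h2
        have hK₁X₂ : K₁ ⊆ X₂ :=
          mcomp_absorb ends (fun x hx hx2 => Set.disjoint_left.mp hD hx hx2) hc₁ hzK hzX
        refine Or.inr (Or.inr (Or.inr ?_))
        apply Set.eq_univ_of_forall
        intro w
        by_cases hw : w ∈ X₁
        · exact Set.mem_union_left _ hw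
        · refine Set.mem_union_right _ ?_
          have hpath := reach_compl ends hconn hc₁ hu₁ hv₁ w hw
          have hsub : (X₁ᶜ : Set V) ⊆ K₂ᶜ := fun x hx hK => hx (hK₂X₁ hK)
          have hmono : Relation.ReflTransGen (mrel ends K₂ᶜ) w u₁ :=
            Relation.ReflTransGen.mono
              (fun a b hab => mrel_mono ends hsub hab) _ _ hpath
          exact Relation.ReflTransGen.trans (hK₁X₂ hu₁) (rtg_symm ends K₂ᶜ hmono)
  · rcases sub21 (fun x hx hK => hX₂K hx (hs hK)) with h | h
    · exact Or.inr (Or.inl h)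
    · exact Or.inr (Or.inr (Or.inl h))
  · rcases sub12 (fun x hx hK => hX₁K hx (hs hK)) with h | h
    · exact Or.inl h
    · exact Or.inr (Or.inr (Or.inl h))

lemma laminar_of_crossfree {V : Type} {A B : Set V} (r : V)
    (h : (∀ x ∈ A, x ∈ B) ∨ (∀ x ∈ B, x ∈ A) ∨ (∀ x ∈ A, x ∉ B) ∨ (∀ x, x ∈ A ∨ x ∈ B)) :
    Disjoint (if r ∈ A then Aᶜ else A) (if r ∈ B then Bᶜ else B) ∨
    ((if r ∈ A then Aᶜ else A) ⊆ (if r ∈ B then Bᶜ else B)) ∨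
    ((if r ∈ B then Bᶜ else B) ⊆ (if r ∈ A then Aᶜ else A)) := by
  have hdis : ∀ {S T : Set V}, (∀ x ∈ S, x ∉ T) → Disjoint S T :=
    fun h => Set.disjoint_left.mpr h
  split_ifs with hA hB hB <;> rcases h with h | h | h | h
  · exact Or.inr (Or.inr (fun x hxB hxA => hxB (h x hxA)))
  · exact Or.inr (Or.inl (fun x hxA hxB => hxA (h x hxB)))
  · exact absurd hB (h r hA)
  · refine Or.inl (hdis fun x hx hx' => ?_)
    have hx1 : x ∉ A := hx
    have hx2 : x ∉ B := hx'
    exact (h x).elim hx1 hx2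
  · exact absurd (h r hA) hB
  · exact Or.inl (hdis fun x hx hxB => hx (h x hxB))
  · exact Or.inr (Or.inr (fun x hxB hxA => h x hxA hxB))
  · exact Or.inr (Or.inl (fun x hx => (h x).resolve_left hx))
  · exact Or.inl (hdis fun x hxA hxB => hxB (h x hxA))
  · exact absurd (h r hB) hA
  · exact Or.inr (Or.inl (fun x hxA hxB => h x hxA hxB))
  · exact Or.inr (Or.inr (fun x hx => (h x).resolve_right hx))
  · exact Or.inr (Or.inl h)
  · exact Or.inr (Or.inr h)
  · exact Or.inl (hdis h)
  · exact ((h r).elim hA hB).elim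

end Stmt13Aux

/-- a laminar family of cuts each containing one edge of a join `J`, and
covering every edge at most twice, can be shrunk to a laminar family of `J`-cuts
`δ(Wᵢ) ⊆ δ(Uᵢ)`; in particular every edge lies in at most two of the new cuts. -/
theorem stmt13 {V ε : Type} [Fintype V] [DecidableEq V] [Fintype ε] [DecidableEq ε]
    (ends : ε → Sym2 V) (hconn : MGConnected ends)
    (J : Finset ε)
    (hJ : ∀ C : Finset ε, IsCycle ends C → (C ∩ J).card ≤ (C \ J).card)
    (m : ℕ) (U : Fin m → Set V)
    (hlam : ∀ i j, Disjoint (U i) (U j) ∨ U i ⊆ U j ∨ U j ⊆ U i)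
    (hJcut : ∀ i, (cutF ends (U i) ∩ J).card = 1)
    (h2 : ∀ e : ε, (Finset.univ.filter (fun i => e ∈ cutF ends (U i))).card ≤ 2) :
    ∃ W : Fin m → Set V,
      (∀ i j, Disjoint (W i) (W j) ∨ W i ⊆ W j ∨ W j ⊆ W i) ∧
      (∀ i, IsSimpleCut ends (W i) ∧ (cutF ends (W i) ∩ J).card = 1 ∧
        cutF ends (W i) ⊆ cutF ends (U i)) ∧
      (∀ e : ε, (Finset.univ.filter (fun i => e ∈ cutF ends (W i))).card ≤ 2) := by
  classical
  open Stmt13Aux in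
  obtain ⟨r, -⟩ := hconn.1
  have hchoice : ∀ i, ∃ q : V × V × ε, q.1 ∈ U i ∧ q.2.1 ∉ U i ∧
      ends q.2.2 = s(q.1, q.2.1) ∧ cutF ends (U i) ∩ J = {q.2.2} := by
    intro i
    obtain ⟨e0, he0⟩ := Finset.card_eq_one.mp (hJcut i)
    have he0m : e0 ∈ cutF ends (U i) ∩ J := by
      rw [he0]; exact Finset.mem_singleton_self e0
    obtain ⟨a, b, hab, ha, hb⟩ :=
      (Stmt13Aux.mem_cutF ends (U i) e0).mp (Finset.mem_inter.mp he0m).1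
    exact ⟨(a, b, e0), ha, hb, hab, he0⟩
  choose q hq1 hq2 hq3 hq4 using hchoice
  set uu : Fin m → V := fun i => (q i).1 with huu
  set vv : Fin m → V := fun i => (q i).2.1 with hvv
  set ee : Fin m → ε := fun i => (q i).2.2 with hee
  set K : Fin m → Set V := fun i => Stmt13Aux.mcomp ends (U i) (uu i) with hKdef
  set X : Fin m → Set V := fun i => Stmt13Aux.mcomp ends (K i)ᶜ (vv i) with hXdef
  have hKU : ∀ i, K i ⊆ U i := fun i => Stmt13Aux.mcomp_subset ends (hq1 i)
  have huK : ∀ i, uu i ∈ K i := fun i => Relation.ReflTransGen.refl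
  have hvK : ∀ i, vv i ∈ (K i)ᶜ := fun i hm => hq2 i (hKU i hm)
  have hXK : ∀ i, X i ⊆ (K i)ᶜ := fun i => Stmt13Aux.mcomp_subset ends (hvK i)
  have hvX : ∀ i, vv i ∈ X i := fun i => Relation.ReflTransGen.refl
  have huX : ∀ i, uu i ∉ X i := fun i hm => hXK i hm (huK i)
  have hKconn : ∀ i, ∀ a ∈ K i, ∀ b ∈ K i,
      Relation.ReflTransGen (Stmt13Aux.mrel ends (K i)) a b :=
    fun i => Stmt13Aux.mcomp_conn' ends
  have hXconn : ∀ i, ∀ a ∈ X i, ∀ b ∈ X i,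
      Relation.ReflTransGen (Stmt13Aux.mrel ends (X i)) a b :=
    fun i => Stmt13Aux.mcomp_conn' ends
  have hcut : ∀ i, cutF ends (X i) ⊆ cutF ends (U i) :=
    fun i => Stmt13Aux.cut_subset ends (hq1 i) (hq2 i)
  have heX : ∀ i, ee i ∈ cutF ends (X i) := by
    intro i
    rw [Stmt13Aux.mem_cutF]
    exact ⟨vv i, uu i, by rw [hq3 i]; exact Sym2.eq_swap, hvX i, huX i⟩
  have heJ : ∀ i, ee i ∈ J := by
    intro i
    have hm : ee i ∈ cutF ends (U i) ∩ J := by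
      rw [hq4 i]; exact Finset.mem_singleton_self _
    exact (Finset.mem_inter.mp hm).2
  have hcard : ∀ i, (cutF ends (X i) ∩ J).card = 1 := by
    intro i
    have hsub : cutF ends (X i) ∩ J ⊆ {ee i} := by
      rw [← hq4 i]
      exact Finset.inter_subset_inter (hcut i) (Finset.Subset.refl _)
    have hmem : ee i ∈ cutF ends (X i) ∩ J := Finset.mem_inter.mpr ⟨heX i, heJ i⟩
    have : cutF ends (X i) ∩ J = {ee i} :=
      Finset.Subset.antisymm hsub (Finset.singleton_subset_iff.mpr hmem)
    rw [this]; exact Finset.card_singleton _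
  have hreach : ∀ i, ∀ w ∉ X i,
      Relation.ReflTransGen (Stmt13Aux.mrel ends (X i)ᶜ) w (uu i) :=
    fun i => Stmt13Aux.reach_compl ends hconn (hKconn i) (huK i) (hvK i)
  have hXconnOn : ∀ i, ConnectedOn ends (X i) := fun i => ⟨⟨vv i, hvX i⟩, hXconn i⟩
  have hXcconnOn : ∀ i, ConnectedOn ends (X i)ᶜ := by
    intro i
    refine ⟨⟨uu i, huX i⟩, ?_⟩
    intro a ha b hb
    exact Relation.ReflTransGen.trans (hreach i a ha)
      (Stmt13Aux.rtg_symm ends (X i)ᶜ (hreach i b hb))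
  have hKlam : ∀ i j, Disjoint (K i) (K j) ∨ K i ⊆ K j ∨ K j ⊆ K i := by
    intro i j
    rcases hlam i j with h | h | h
    · exact Or.inl (h.mono (hKU i) (hKU j))
    · by_cases hd : Disjoint (K i) (K j)
      · exact Or.inl hd
      · obtain ⟨y, hy1, hy2⟩ := Set.not_disjoint_iff.mp hd
        exact Or.inr (Or.inl
          (Stmt13Aux.mcomp_absorb ends ((hKU i).trans h) (hKconn i) hy1 hy2))
    · by_cases hd : Disjoint (K i) (K j)
      · exact Or.inl hd
      · obtain ⟨y, hy1, hy2⟩ := Set.not_disjoint_iff.mp hd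
        exact Or.inr (Or.inr
          (Stmt13Aux.mcomp_absorb ends ((hKU j).trans h) (hKconn j) hy2 hy1))
  refine ⟨fun i => if r ∈ X i then (X i)ᶜ else X i, ?_, ?_, ?_⟩
  · intro i j
    have hc := Stmt13Aux.crossfree_aux ends hconn (huK i) (huK j) (hKconn i) (hKconn j)
      (hvK i) (hvK j) (hKlam i j)
    apply Stmt13Aux.laminar_of_crossfree r
    rcases hc with h | h | h | h
    · exact Or.inl (fun x hx => h hx)
    · exact Or.inr (Or.inl (fun x hx => h hx))
    · exact Or.inr (Or.inr (Or.inl (fun x hx hx' => Set.disjoint_left.mp h hx hx')))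
    · exact Or.inr (Or.inr (Or.inr (fun x =>
        (Set.mem_union x _ _).mp (Set.eq_univ_iff_forall.mp h x))))
  · intro i
    have hcutW : cutF ends (if r ∈ X i then (X i)ᶜ else X i) = cutF ends (X i) := by
      split_ifs with h
      · exact Stmt13Aux.cutF_compl ends (X i)
      · rfl
    refine ⟨?_, ?_, ?_⟩
    · show IsSimpleCut ends (if r ∈ X i then (X i)ᶜ else X i)
      split_ifs with h
      · exact ⟨hXcconnOn i, by rw [compl_compl]; exact hXconnOn i⟩
      · exact ⟨hXconnOn i, hXcconnOn i⟩
    · show (cutF ends (if r ∈ X i then (X i)ᶜ else X i) ∩ J).card = 1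
      rw [hcutW]; exact hcard i
    · show cutF ends (if r ∈ X i then (X i)ᶜ else X i) ⊆ cutF ends (U i)
      rw [hcutW]; exact hcut i
  · intro e
    refine le_trans (Finset.card_le_card ?_) (h2 e)
    intro i hi
    simp only [Finset.mem_filter, Finset.mem_univ, true_and] at hi ⊢
    split_ifs at hi with h
    · exact hcut i (by rwa [Stmt13Aux.cutF_compl] at hi)
    · exact hcut i hi

end
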